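/- arXiv:1401.1125 — 4 statements merged into one kernel-verified Lean document; each statement's English description precedes it below -/
import Mathlib

section
/- Let U be a finite set and let G be a subgroup of Sym(U). Then G has a unique coarsest supporting partition: there exists a partition SP(G) of U that supports G such that every partition of U supporting G is a refinement of SP(G) (i.e. SP(G) is coarser than every supporting partition), and any partition with this property equals SP(G). -/
/-- The pointwise stabiliser of a family of subsets `C` of `U` inside `Sym(U)`. -/
def PointwiseStab {U : Type*} (C : Set (Set U)) : Set (Equiv.Perm U) :=
  {σ : Equiv.Perm U | ∀ P ∈ C, ⇑σ '' P = P}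

/-- A partition `C` supports a subgroup `G ≤ Sym(U)` if `Stab_U(C) ⊆ G`. -/
def Supports {U : Type*} (C : Set (Set U)) (G : Subgroup (Equiv.Perm U)) : Prop :=
  PointwiseStab C ⊆ (G : Set (Equiv.Perm U))

/-- `C'` is as coarse as `C` if every part of `C` is contained in some part of `C'`. -/
def CoarserThan {U : Type*} (C' C : Set (Set U)) : Prop :=
  ∀ P ∈ C, ∃ P' ∈ C', P ⊆ P'

/-- `σ` stabilises every class of `r` iff it moves each point within its class. -/
lemma mem_pointwiseStab_classes {U : Type*} (r : Setoid U) (σ : Equiv.Perm U) :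
    σ ∈ PointwiseStab r.classes ↔ ∀ x, r x (σ x) := by
  constructor
  · intro h x
    have hcl : {z | r z x} ∈ r.classes := ⟨x, rfl⟩
    have := h _ hcl
    have hx : σ x ∈ {z | r z x} := by
      rw [← this]; exact ⟨x, r.refl' x, rfl⟩
    exact r.symm' hx
  · rintro h P ⟨y, rfl⟩
    ext z
    constructor
    · rintro ⟨w, hw, rfl⟩
      exact r.trans' (r.symm' (h w)) hw
    · intro hz
      refine ⟨σ.symm z, ?_, σ.apply_symm_apply z⟩
      have := h (σ.symm z)
      rw [σ.apply_symm_apply] at this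
      exact r.trans' this hz

lemma swap_mem_of_rel {U : Type*} [DecidableEq U] (r : Setoid U) {a b : U} (h : r a b) :
    Equiv.swap a b ∈ PointwiseStab r.classes := by
  rw [mem_pointwiseStab_classes]
  intro x
  rcases eq_or_ne x a with rfl | hxa
  · rw [Equiv.swap_apply_left]; exact h
  rcases eq_or_ne x b with rfl | hxb
  · rw [Equiv.swap_apply_right]; exact r.symm' h
  · rw [Equiv.swap_apply_of_ne_of_ne hxa hxb]

/-- Key lemma: a permutation moving every point within its `r`-class lies in any
subgroup containing all swaps of `r`-related pairs. -/
lemma perm_mem_of_rel {U : Type*} [Fintype U] [DecidableEq U] (r : Setoid U)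
    (G : Subgroup (Equiv.Perm U)) (hswap : ∀ a b : U, r a b → Equiv.swap a b ∈ G)
    (σ : Equiv.Perm U) (hσ : ∀ x, r x (σ x)) : σ ∈ G := by
  suffices H : ∀ n (σ : Equiv.Perm U), (∀ x, r x (σ x)) → σ.support.card ≤ n → σ ∈ G from
    H _ σ hσ le_rfl
  intro n
  induction n with
  | zero =>
    intro σ hσ hc
    have : σ.support = ∅ := Finset.card_eq_zero.1 (Nat.le_zero.1 hc)
    have : σ = 1 := Equiv.Perm.support_eq_empty_iff.1 this
    exact this ▸ G.one_mem
  | succ n ih =>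
  intro σ hσ hn
  rcases eq_or_ne σ 1 with rfl | h1
  · exact G.one_mem
  · obtain ⟨a, ha⟩ : ∃ a, σ a ≠ a := by
      by_contra h
      push_neg at h
      exact h1 (Equiv.ext h)
    set τ := Equiv.swap a (σ a) with hτ
    have hτG : τ ∈ G := hswap _ _ (hσ a)
    have hsub : (τ * σ).support ⊂ σ.support := by
      constructor
      · intro x hx
        simp only [Equiv.Perm.mem_support] at hx ⊢
        intro hfix
        apply hx
        simp [hτ, Equiv.Perm.mul_apply, hfix]
        rcases eq_or_ne x a with rfl | hxa
        · exact absurd hfix ha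
        · have hxb : x ≠ σ a := by
            intro h; exact hxa (σ.injective (hfix.trans h))
          rw [Equiv.swap_apply_of_ne_of_ne hxa hxb]
      · intro hle
        have haT : a ∉ (τ * σ).support := by
          simp [Equiv.Perm.mem_support, hτ, Equiv.Perm.mul_apply]
        have haS : a ∈ σ.support := Equiv.Perm.mem_support.2 ha
        exact haT (hle haS)
    have hrel : ∀ x, r x ((τ * σ) x) := by
      intro x
      simp only [Equiv.Perm.mul_apply, hτ]
      rcases eq_or_ne (σ x) a with h | hna
      · rw [h, Equiv.swap_apply_left]
        exact r.trans' (hσ x) (h ▸ hσ a)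
      rcases eq_or_ne (σ x) (σ a) with h | hnb
      · have : x = a := σ.injective h
        subst this
        rw [h, Equiv.swap_apply_right]
      · rw [Equiv.swap_apply_of_ne_of_ne hna hnb]
        exact hσ x
    have hcard : (τ * σ).support.card ≤ n :=
      Nat.lt_succ_iff.1 (lt_of_lt_of_le (Finset.card_lt_card hsub) hn)
    have : τ * σ ∈ G := ih _ hrel hcard
    have := G.mul_mem hτG this
    rwa [hτ, ← mul_assoc, Equiv.swap_mul_self, one_mul] at this

lemma swap_mem_of_eqvGen {U : Type*} [DecidableEq U] {rel : U → U → Prop}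
    (G : Subgroup (Equiv.Perm U)) (hswap : ∀ a b : U, rel a b → Equiv.swap a b ∈ G)
    {a b : U} (h : Relation.EqvGen rel a b) : Equiv.swap a b ∈ G := by
  induction h with
  | rel x y hxy => exact hswap _ _ hxy
  | refl x => simp [Equiv.swap_self]; exact G.one_mem
  | symm x y _ ih => rwa [Equiv.swap_comm]
  | trans x y z _ _ ih1 ih2 =>
    rcases eq_or_ne x y with rfl | hxy
    · exact ih2
    rcases eq_or_ne y z with rfl | hyz
    · exact ih1
    rcases eq_or_ne x z with rfl | hxz
    · simp [Equiv.swap_self]; exact G.one_mem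
    · have key : Equiv.swap x z =
          Equiv.swap x y * Equiv.swap y z * Equiv.swap x y := by
        have h2 := Equiv.swap_apply_apply (Equiv.swap x y) y z
        rw [Equiv.swap_apply_right,
          Equiv.swap_apply_of_ne_of_ne (Ne.symm hxz) (Ne.symm hyz), Equiv.swap_inv] at h2
        exact h2
      rw [key]
      exact G.mul_mem (G.mul_mem ih1 ih2) ih1

/-- Every subgroup `G ≤ Sym(U)` of a finite set `U` has a unique coarsest
supporting partition. -/
theorem stmt_1 {U : Type*} [Finite U] (G : Subgroup (Equiv.Perm U)) :
    ∃! SPG : Set (Set U),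
      Setoid.IsPartition SPG ∧ Supports SPG G ∧
        ∀ C : Set (Set U), Setoid.IsPartition C → Supports C G → CoarserThan SPG C := by
  classical
  cases nonempty_fintype U
  set S : Set (Setoid U) := {s | Supports s.classes G} with hS
  set r : Setoid U := sSup S with hr
  have hrel : ∀ x y : U, r x y ↔ Relation.EqvGen (fun x y => ∃ s : Setoid U, s ∈ S ∧ s x y) x y := by
    intro x y
    rw [hr, Setoid.sSup_eq_eqvGen]
    rfl
  -- r.classes supports G
  have hsupp : Supports r.classes G := by
    intro σ hσ
    rw [mem_pointwiseStab_classes] at hσ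
    refine perm_mem_of_rel r G ?_ σ hσ
    intro a b hab
    rw [hrel] at hab
    refine swap_mem_of_eqvGen G ?_ hab
    rintro x y ⟨s, hsS, hxy⟩
    exact hsS (swap_mem_of_rel s hxy)
  have hcoarse : ∀ C : Set (Set U), Setoid.IsPartition C → Supports C G →
      CoarserThan r.classes C := by
    intro C hC hCsupp
    have hsC : Setoid.mkClasses C hC.2 ∈ S := by
      rw [hS, Set.mem_setOf_eq, Setoid.classes_mkClasses C hC]
      exact hCsupp
    have hle : Setoid.mkClasses C hC.2 ≤ r := le_sSup hsC
    intro P hP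
    rw [← Setoid.classes_mkClasses C hC] at hP
    obtain ⟨y, rfl⟩ := hP
    exact ⟨{x | r x y}, ⟨y, rfl⟩, fun x hx => hle hx⟩
  refine ⟨r.classes, ⟨Setoid.isPartition_classes r, hsupp, hcoarse⟩, ?_⟩
  rintro C' ⟨hC'part, hC'supp, hC'coarse⟩
  -- both coarser than each other ⇒ equal
  have h1 : CoarserThan r.classes C' := hcoarse C' hC'part hC'supp
  have h2 : CoarserThan C' r.classes :=
    hC'coarse r.classes (Setoid.isPartition_classes r) hsupp
  have key : ∀ (A B : Set (Set U)), Setoid.IsPartition A → Setoid.IsPartition B →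
      CoarserThan B A → CoarserThan A B → A ⊆ B := by
    intro A B hA hB hBA hAB P hP
    obtain ⟨Q, hQ, hPQ⟩ := hBA P hP
    obtain ⟨P', hP', hQP'⟩ := hAB Q hQ
    obtain ⟨a, ha⟩ := Setoid.nonempty_of_mem_partition hA hP
    obtain ⟨b, hb, hbu⟩ := hA.2 a
    have e1 : P = b := hbu P ⟨hP, ha⟩
    have e2 : P' = b := hbu P' ⟨hP', hQP' (hPQ ha)⟩
    have : P = P' := e1.trans e2.symm
    have hQP : Q ⊆ P := this ▸ hQP'
    have : P = Q := Set.Subset.antisymm hPQ hQP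
    exact this ▸ hQ
  exact Set.Subset.antisymm
    (key C' r.classes hC'part (Setoid.isPartition_classes r) h1 h2)
    (key r.classes C' (Setoid.isPartition_classes r) hC'part h2 h1)
end

section
/- Let U be a finite set and let G be a subgroup of Sym(U). Then Stab_U(SP(G)) ⊆ G ⊆ SStab_U(SP(G)): the pointwise stabiliser of the coarsest supporting partition of G is contained in G, and G is contained in the setwise stabiliser of that partition (i.e. every σ ∈ G maps each part of SP(G) onto a part of SP(G)). -/
/-- `C` is the coarsest partition supporting `G`. -/
def IsCoarsestSupporting {U : Type*} (C : Set (Set U)) (G : Subgroup (Equiv.Perm U)) : Prop :=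
  Setoid.IsPartition C ∧ Supports C G ∧
    ∀ C' : Set (Set U), Setoid.IsPartition C' → Supports C' G → CoarserThan C C'

/-- For a finite set `U` and `G ≤ Sym(U)` with coarsest supporting partition
`C = SP(G)`: the pointwise stabiliser of `C` is contained in `G`, and `G` is
contained in the setwise stabiliser of `C` (every `σ ∈ G` maps each part of `C`
onto a part of `C`). -/
theorem stmt_4 {U : Type*} [Finite U] (G : Subgroup (Equiv.Perm U)) (C : Set (Set U))
    (hC : IsCoarsestSupporting C G) :
    (∀ σ : Equiv.Perm U, (∀ P ∈ C, ⇑σ '' P = P) → σ ∈ G) ∧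
      (∀ σ ∈ G, ∀ P ∈ C, ⇑σ '' P ∈ C) := by
  obtain ⟨hpart, hsupp, hcoarse⟩ := hC
  refine ⟨fun σ hσ => hsupp hσ, ?_⟩
  -- parts overlapping are equal
  have heq : ∀ P ∈ C, ∀ Q ∈ C, ∀ a : U, a ∈ P → a ∈ Q → P = Q := by
    intro P hP Q hQ a haP haQ
    obtain ⟨b, _, hb⟩ := hpart.2 a
    rw [hb P ⟨hP, haP⟩, hb Q ⟨hQ, haQ⟩]
  intro σ hσ P hP
  -- the image partition
  set C' : Set (Set U) := (fun P => ⇑σ '' P) '' C with hC'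
  have hpart' : Setoid.IsPartition C' := by
    constructor
    · rintro ⟨Q, hQ, hQe⟩
      exact hpart.1 (by rwa [Set.image_eq_empty.mp hQe] at hQ)
    · intro a
      obtain ⟨b, ⟨hbC, hab⟩, hb⟩ := hpart.2 (σ.symm a)
      refine ⟨⇑σ '' b, ⟨⟨b, hbC, rfl⟩, ⟨σ.symm a, hab, σ.apply_symm_apply a⟩⟩, ?_⟩
      rintro y ⟨⟨Q, hQ, rfl⟩, ha⟩
      obtain ⟨x, hxQ, hxa⟩ := ha
      have : σ.symm a ∈ Q := by rw [← hxa]; simpa using hxQ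
      rw [hb Q ⟨hQ, this⟩]
  have hsupp' : Supports C' G := by
    intro τ hτ
    have hmem : σ⁻¹ * τ * σ ∈ G := by
      apply hsupp
      intro Q hQ
      have := hτ (⇑σ '' Q) ⟨Q, hQ, rfl⟩
      have h2 : ⇑σ⁻¹ '' (⇑τ '' (⇑σ '' Q)) = ⇑σ⁻¹ '' (⇑σ '' Q) := by rw [this]
      simpa [Set.image_image, Equiv.Perm.inv_def] using h2
    have : σ * (σ⁻¹ * τ * σ) * σ⁻¹ ∈ G := G.mul_mem (G.mul_mem hσ hmem) (G.inv_mem hσ)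
    simpa [mul_assoc] using this
  have hco := hcoarse C' hpart' hsupp'
  -- σ '' P ⊆ Q for some Q ∈ C
  obtain ⟨Q, hQ, hPQ⟩ := hco (⇑σ '' P) ⟨P, hP, rfl⟩
  -- σ⁻¹ '' Q ⊆ P' for some P' ∈ C' i.e. P' = σ '' R
  -- use coarseness of C' over C? instead: C is coarser than (σ⁻¹ image partition).
  -- Apply same with σ⁻¹: build C'' and get Q ⊆ σ '' R for some R ∈ C
  have hpart'' : Setoid.IsPartition ((fun P => ⇑σ.symm '' P) '' C) := by
    constructor
    · rintro ⟨R, hR, hRe⟩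
      exact hpart.1 (by rwa [Set.image_eq_empty.mp hRe] at hR)
    · intro a
      obtain ⟨b, ⟨hbC, hab⟩, hb⟩ := hpart.2 (σ a)
      refine ⟨⇑σ.symm '' b, ⟨⟨b, hbC, rfl⟩, ⟨σ a, hab, σ.symm_apply_apply a⟩⟩, ?_⟩
      rintro y ⟨⟨R, hR, rfl⟩, ha⟩
      obtain ⟨x, hxR, hxa⟩ := ha
      have : σ a ∈ R := by rw [← hxa]; simpa using hxR
      rw [hb R ⟨hR, this⟩]
  have hsupp'' : Supports ((fun P => ⇑σ.symm '' P) '' C) G := by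
    intro τ hτ
    have hmem : σ * τ * σ⁻¹ ∈ G := by
      apply hsupp
      intro R hR
      have := hτ (⇑σ.symm '' R) ⟨R, hR, rfl⟩
      have h2 : ⇑σ '' (⇑τ '' (⇑σ.symm '' R)) = ⇑σ '' (⇑σ.symm '' R) := by rw [this]
      simpa [Set.image_image, Equiv.Perm.inv_def] using h2
    have : σ⁻¹ * (σ * τ * σ⁻¹) * σ ∈ G := G.mul_mem (G.mul_mem (G.inv_mem hσ) hmem) hσ
    simpa [mul_assoc] using this
  obtain ⟨P', hP', hQP'⟩ := hcoarse _ hpart'' hsupp'' (⇑σ.symm '' Q) ⟨Q, hQ, rfl⟩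
  have hPsub : P ⊆ ⇑σ.symm '' Q := fun p hp => ⟨σ p, hPQ ⟨p, hp, rfl⟩, σ.symm_apply_apply p⟩
  have hPne : P.Nonempty := Set.nonempty_iff_ne_empty.mpr (fun h => hpart.1 (h ▸ hP))
  obtain ⟨p, hp⟩ := hPne
  have hPP' : P = P' := heq P hP P' hP' p hp (hQP' (hPsub hp))
  have hQsub : ⇑σ.symm '' Q ⊆ P := hPP' ▸ hQP'
  have : ⇑σ '' P = Q := by
    apply Set.Subset.antisymm hPQ
    intro q hq
    exact ⟨σ.symm q, hQsub ⟨q, hq, rfl⟩, σ.apply_symm_apply q⟩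
  rw [this]; exact hQ
end

section
/- Let ε be a real number and n a positive integer with 0 ≤ ε < 1 and log₂ n ≥ 4/ε. Let 𝒫 be a partition of [n] = {1,…,n} with k parts, and let s := [Sym(n) : SStab_n(𝒫)] be the index of the setwise stabiliser of 𝒫 in Sym(n). If n ≤ s ≤ 2^(n^(1−ε)), then min{k, n−k} ≤ (8/ε)·(log₂ s)/(log₂ n). -/
open Pointwise

set_option maxHeartbeats 1600000

private lemma fact_mul_fact_le (c : ℕ) : ∀ b : ℕ, 1 ≤ b →
    (c+1).factorial * b.factorial ≤ (c+b).factorial := by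
  intro b hb
  induction b with
  | zero => omega
  | succ b ih =>
    rcases Nat.eq_zero_or_pos b with rfl | hb'
    · simp
    · calc (c+1).factorial * (b+1).factorial = (b+1) * ((c+1).factorial * b.factorial) := by
            rw [Nat.factorial_succ b]; ring
        _ ≤ (b+1) * (c+b).factorial := Nat.mul_le_mul_left _ (ih hb')
        _ ≤ (c+b+1) * (c+b).factorial := Nat.mul_le_mul_right _ (by omega)
        _ = (c+b+1).factorial := (Nat.factorial_succ _).symm

private lemma prod_fact_le {ι : Type*} (t : Finset ι) (a : ι → ℕ) (ha : ∀ i ∈ t, 1 ≤ a i) :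
    (∏ i ∈ t, (a i).factorial) ≤ (∑ i ∈ t, (a i - 1) + 1).factorial := by
  classical
  induction t using Finset.induction_on with
  | empty => simp
  | @insert j t hj ih =>
    rw [Finset.prod_insert hj, Finset.sum_insert hj]
    have h1 := ih (fun i hi => ha i (Finset.mem_insert_of_mem hi))
    have haj := ha j (Finset.mem_insert_self j t)
    have hkey := fact_mul_fact_le (a j - 1) (∑ i ∈ t, (a i - 1) + 1) (by omega)
    have hj1 : a j - 1 + 1 = a j := by omega
    rw [hj1] at hkey
    calc (a j).factorial * ∏ i ∈ t, (a i).factorial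
        ≤ (a j).factorial * (∑ i ∈ t, (a i - 1) + 1).factorial :=
          Nat.mul_le_mul_left _ h1
      _ ≤ ((a j - 1) + (∑ i ∈ t, (a i - 1) + 1)).factorial := hkey
      _ = ((a j - 1) + ∑ i ∈ t, (a i - 1) + 1).factorial := by ring_nf

private lemma sq_le_two_pow : ∀ m : ℕ, 9 ≤ m → m * m ≤ 2 ^ (m - 1) := by
  intro m hm
  induction m, hm using Nat.le_induction with
  | base => norm_num
  | succ m hm ih =>
    have h1 : (m+1) * (m+1) ≤ 2 * (m * m) := by nlinarith
    have h3 : 2^m = 2^(m-1) * 2 := by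
      rw [← pow_succ]; congr 1; omega
    calc (m+1)*(m+1) ≤ 2*(m*m) := h1
      _ ≤ 2 * 2^(m-1) := by omega
      _ = 2^((m+1)-1) := by rw [Nat.add_sub_cancel, h3]; ring

private lemma choose_lb (n : ℕ) : ∀ j : ℕ, 2*j ≤ n → ((n:ℝ)/j)^j ≤ n.choose j := by
  intro j
  induction j with
  | zero => simp
  | succ j ih =>
    intro hj
    rcases Nat.eq_zero_or_pos j with rfl | hj0
    · have : ((n:ℝ)/((0:ℕ)+1:ℕ))^(0+1) = (n:ℝ) := by norm_num
      rw [this, Nat.choose_one_right]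
    · have ihj := ih (by omega)
      have hjR : (0:ℝ) < j := by exact_mod_cast hj0
      have hj1R : (0:ℝ) < (j:ℝ) + 1 := by linarith
      have hnj : (j:ℝ) ≤ n := by exact_mod_cast (by omega : j ≤ n)
      have h2jn : 2*(j:ℝ) ≤ n := by exact_mod_cast (by omega : 2*j ≤ n)
      have hch : (n.choose (j+1) : ℝ) * ((j:ℝ)+1) = (n.choose j : ℝ) * ((n:ℝ) - j) := by
        have h := congrArg (Nat.cast (R := ℝ)) (Nat.choose_succ_right_eq n j)
        push_cast [Nat.cast_sub (by omega : j ≤ n)] at h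
        linarith [h]
      set A := ((n:ℝ)/((j:ℝ)+1))^j with hA
      have hApos : 0 ≤ A := by positivity
      have hB : 2 * A ≤ ((n:ℝ)/j)^j := by
        have hfrac : (n:ℝ)/j = (n/((j:ℝ)+1)) * (((j:ℝ)+1)/j) := by
          field_simp
        have hbern : (2:ℝ) ≤ (((j:ℝ)+1)/j)^j := by
          have h1 : (((j:ℝ)+1)/j) = 1 + 1/j := by field_simp
          have hd : (0:ℝ) < 1/(j:ℝ) := by positivity
          have h2 := one_add_mul_le_pow (a := 1/(j:ℝ)) (by linarith) j
          have h3 : (1:ℝ) + (j:ℝ) * (1/j) = 2 := by field_simp; norm_num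
          rw [h1]; rw [h3] at h2; exact h2
        calc 2 * A ≤ (((j:ℝ)+1)/j)^j * A := by nlinarith
          _ = ((n:ℝ)/j)^j := by rw [hfrac, mul_pow]; ring
      have hmain : A * (n:ℝ) ≤ (n.choose (j+1) : ℝ) * ((j:ℝ)+1) := by
        rw [hch]
        calc A * (n:ℝ) ≤ (2*A) * ((n:ℝ) - j) := by nlinarith
          _ ≤ ((n:ℝ)/j)^j * ((n:ℝ)-j) := by nlinarith
          _ ≤ (n.choose j : ℝ) * ((n:ℝ)-j) := by nlinarith
      have hpow : ((n:ℝ)/(((j:ℕ)+1:ℕ)))^(j+1) = A * (n:ℝ) / ((j:ℝ)+1) := by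
        push_cast
        rw [hA, pow_succ]; field_simp
      rw [hpow, div_le_iff₀ hj1R]
      linarith


private lemma counting (n : ℕ) (C : Set (Set (Fin n))) (hC : Setoid.IsPartition C) :
    C.ncard ≤ n ∧
    Nat.factorial n ≤ (MulAction.stabilizer (Equiv.Perm (Fin n)) C).index *
      ((n - C.ncard + 1).factorial * (C.ncard).factorial) := by
  classical
  set G := Equiv.Perm (Fin n) with hG
  set H := MulAction.stabilizer G C with hH
  -- sigma decomposition
  have hinj : Function.Injective (fun x : Σ P : C, ↥(P.1) => (x.2 : Fin n)) := by
    rintro ⟨⟨P, hP⟩, ⟨x, hx⟩⟩ ⟨⟨Q, hQ⟩, ⟨y, hy⟩⟩ h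
    simp only at h
    subst h
    obtain ⟨R, hR, hun⟩ := hC.2 x
    have hPQ : P = Q := (hun P ⟨hP, hx⟩).trans (hun Q ⟨hQ, hy⟩).symm
    subst hPQ
    rfl
  have hsurj : Function.Surjective (fun x : Σ P : C, ↥(P.1) => (x.2 : Fin n)) := by
    intro x
    obtain ⟨P, hP, -⟩ := hC.2 x
    exact ⟨⟨⟨P, hP.1⟩, ⟨x, hP.2⟩⟩, rfl⟩
  have hsum : ∑ P : C, Fintype.card ↥(P.1) = n := by
    have h := Fintype.card_congr (Equiv.ofBijective _ ⟨hinj, hsurj⟩)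
    simpa using h
  have hone : ∀ P : C, 1 ≤ Fintype.card ↥(P.1) := by
    intro P
    have h1 : P.1.Nonempty := Set.nonempty_iff_ne_empty.mpr (fun h => hC.1 (h ▸ P.2))
    have h2 : Nonempty ↥(P.1) := h1.to_subtype
    exact Fintype.card_pos
  have hkcard : Fintype.card ↥C = C.ncard := by
    rw [← Nat.card_coe_set_eq, Nat.card_eq_fintype_card]
  have hkn : C.ncard ≤ n := by
    calc C.ncard = Fintype.card ↥C := hkcard.symm
      _ = ∑ _P : C, 1 := by simp
      _ ≤ ∑ P : C, Fintype.card ↥(P.1) := Finset.sum_le_sum (fun i _ => hone i)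
      _ = n := hsum
  -- the homomorphism to permutations of parts
  have hstab : ∀ (h : H) (P : Set (Fin n)), P ∈ C → (h : G) • P ∈ C := by
    intro h P hP
    have hh : (h : G) • C = C := h.2
    rw [← hh]
    exact Set.smul_mem_smul_set hP
  let φ : H →* Equiv.Perm ↥C :=
    { toFun := fun h =>
        { toFun := fun P => ⟨(h : G) • P.1, hstab h P.1 P.2⟩
          invFun := fun P => ⟨(h : G)⁻¹ • P.1, by simpa using hstab h⁻¹ P.1 P.2⟩
          left_inv := fun P => by ext1; exact inv_smul_smul (h : G) P.1
          right_inv := fun P => by ext1; exact smul_inv_smul (h : G) P.1 }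
      map_one' := by ext P; simp
      map_mul' := fun a b => by ext P; simp [mul_smul] }
  have hcard1 : Nat.card H = Nat.card (H ⧸ φ.ker) * Nat.card φ.ker :=
    Subgroup.card_eq_card_quotient_mul_card_subgroup φ.ker
  have hquot : Nat.card (H ⧸ φ.ker) ≤ (C.ncard).factorial := by
    have h1 : Nat.card (H ⧸ φ.ker) = Nat.card φ.range :=
      Nat.card_congr (QuotientGroup.quotientKerEquivRange φ).toEquiv
    have h2 : Nat.card φ.range ≤ Nat.card (Equiv.Perm ↥C) :=
      Nat.card_le_card_of_injective _ Subtype.val_injective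
    have h3 : Nat.card (Equiv.Perm ↥C) = (C.ncard).factorial := by
      rw [Nat.card_eq_fintype_card, Fintype.card_perm, hkcard]
    omega
  -- kernel bound
  have hfix : ∀ (h : ↥φ.ker) (P : C) (x : Fin n), x ∈ P.1 ↔ (h.1 : G) x ∈ P.1 := by
    intro h P x
    have h1 : φ h.1 = 1 := MonoidHom.mem_ker.mp h.2
    have h2 : (h.1 : G) • P.1 = P.1 := by
      have h3 := congrArg (fun e : Equiv.Perm ↥C => (e P).1) h1
      simpa [φ] using h3
    constructor
    · intro hx
      have : (h.1 : G) • x ∈ (h.1 : G) • P.1 := Set.smul_mem_smul_set hx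
      rwa [h2] at this
    · intro hx
      rw [← h2] at hx
      obtain ⟨y, hy, hxy⟩ := hx
      have hyx : y = x := by
        have : (h.1 : G) y = (h.1 : G) x := hxy
        exact (h.1 : G).injective this
      rwa [← hyx]
  have hkerle : Nat.card φ.ker ≤ ∏ P : C, (Fintype.card ↥(P.1)).factorial := by
    have hfinj : Function.Injective
        (fun (h : ↥φ.ker) => (fun P : C => Equiv.Perm.subtypePerm (h.1 : G) (fun x => (hfix h P x).symm))) := by
      intro a b hab
      have hpt : ∀ x : Fin n, (a.1 : G) x = (b.1 : G) x := by
        intro x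
        obtain ⟨P, hP, -⟩ := hC.2 x
        have h4 := congrFun hab ⟨P, hP.1⟩
        have h5 := congrArg (fun e => (e ⟨x, hP.2⟩ : ↥P)) h4
        simpa using congrArg Subtype.val h5
      apply Subtype.ext; apply Subtype.ext; exact Equiv.ext hpt
    have h6 := Nat.card_le_card_of_injective _ hfinj
    rw [Nat.card_pi] at h6
    have h7 : ∀ P : C, Nat.card (Equiv.Perm ↥(P.1)) = (Fintype.card ↥(P.1)).factorial :=
      fun P => by rw [Nat.card_eq_fintype_card, Fintype.card_perm]
    exact h6.trans_eq (Finset.prod_congr rfl (fun P _ => h7 P))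
  have hprod : (∏ P : C, (Fintype.card ↥(P.1)).factorial) ≤ (n - C.ncard + 1).factorial := by
    have h8 := prod_fact_le (Finset.univ : Finset ↥C) (fun P => Fintype.card ↥(P.1))
      (fun i _ => hone i)
    have h9 : (∑ P : C, (Fintype.card ↥(P.1) - 1)) + 1 = n - C.ncard + 1 := by
      have h10 : (∑ P : C, (Fintype.card ↥(P.1) - 1)) + C.ncard = n := by
        have h11 : ∀ P : C, (Fintype.card ↥(P.1) - 1) + 1 = Fintype.card ↥(P.1) := fun P => by
          have := hone P; omega
        have h12 : (∑ P : C, (Fintype.card ↥(P.1) - 1)) + Fintype.card ↥C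
            = ∑ P : C, Fintype.card ↥(P.1) :=
          calc (∑ P : C, (Fintype.card ↥(P.1) - 1)) + Fintype.card ↥C
              = ∑ P : C, ((Fintype.card ↥(P.1) - 1) + 1) := by
                rw [Finset.sum_add_distrib]; simp
            _ = ∑ P : C, Fintype.card ↥(P.1) := Finset.sum_congr rfl (fun P _ => h11 P)
        omega
      omega
    rw [h9] at h8
    exact h8
  have hHle : Nat.card H ≤ (n - C.ncard + 1).factorial * (C.ncard).factorial := by
    rw [hcard1]
    calc Nat.card (H ⧸ φ.ker) * Nat.card φ.ker
        ≤ (C.ncard).factorial * (n - C.ncard + 1).factorial :=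
          Nat.mul_le_mul hquot (le_trans hkerle hprod)
      _ = (n - C.ncard + 1).factorial * (C.ncard).factorial := Nat.mul_comm _ _
  have hindex := Subgroup.index_mul_card H
  have hcardG : Nat.card G = n.factorial := by
    show Nat.card (Equiv.Perm (Fin n)) = n.factorial
    rw [Nat.card_eq_fintype_card, Fintype.card_perm, Fintype.card_fin]
  refine ⟨hkn, ?_⟩
  calc n.factorial = Nat.card G := hcardG.symm
    _ = H.index * Nat.card H := hindex.symm
    _ ≤ H.index * ((n - C.ncard + 1).factorial * (C.ncard).factorial) :=
        Nat.mul_le_mul_left _ hHle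

/-- Lemma 6 (small number of parts): let `0 ≤ ε < 1` with `log₂ n ≥ 4/ε`
(written multiplicatively as `4 ≤ ε · log₂ n`), let `C` be a partition of `[n]`
with `k` parts and let `s` be the index of the setwise stabiliser of `C` in
`Sym(n)`.  If `n ≤ s ≤ 2^(n^(1-ε))`, then
`min{k, n-k} ≤ (8/ε) · (log₂ s)/(log₂ n)`. -/
theorem stmt_5 (n : ℕ) (hn : 0 < n) (ε : ℝ) (hε0 : 0 ≤ ε) (hε1 : ε < 1)
    (hlog : 4 ≤ ε * Real.logb 2 n)
    (C : Set (Set (Fin n))) (hC : Setoid.IsPartition C) (k : ℕ) (hk : C.ncard = k)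
    (s : ℕ) (hs : s = (MulAction.stabilizer (Equiv.Perm (Fin n)) C).index)
    (hns : n ≤ s) (hsub : (s : ℝ) ≤ (2 : ℝ) ^ ((n : ℝ) ^ (1 - ε))) :
    (min k (n - k) : ℝ) ≤ 8 / ε * (Real.logb 2 s / Real.logb 2 n) := by
  classical
  obtain ⟨hkn, hcount⟩ := counting n C hC
  rw [hk] at hkn hcount
  rw [← hs] at hcount
  set L := Real.logb 2 (n:ℝ) with hLdef
  set S := Real.logb 2 (s:ℝ) with hSdef
  have hε : 0 < ε := by
    rcases eq_or_lt_of_le hε0 with h | h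
    · exfalso; rw [← h] at hlog; simp at hlog; linarith
    · exact h
  have hL0 : 0 < L := by nlinarith
  have hL4 : 4 ≤ L := by nlinarith
  have hs0 : 0 < s := lt_of_lt_of_le hn hns
  have hsR1 : (1:ℝ) ≤ s := by exact_mod_cast hs0
  have hnsR : (n:ℝ) ≤ s := by exact_mod_cast hns
  have hnR1 : (1:ℝ) ≤ n := by exact_mod_cast hn
  have hSL : L ≤ S := by
    apply Real.logb_le_logb_of_le (by norm_num) (by positivity) hnsR
  have hS4 : 4 ≤ S := le_trans hL4 hSL
  set m := min k (n - k) with hm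
  have hmin : min (k:ℝ) ((n:ℝ) - (k:ℝ)) = (m:ℝ) := by
    rw [hm, Nat.cast_min, Nat.cast_sub hkn]
  rw [show (min (k:ℝ) ((n:ℝ) - (k:ℝ))) = (m:ℝ) from hmin]
  by_cases hm8 : m ≤ 8
  · have h1 : (1:ℝ) ≤ S / L := (one_le_div hL0).mpr hSL
    have h2 : (8:ℝ) ≤ 8 / ε := by rw [le_div_iff₀ hε]; nlinarith
    calc (m:ℝ) ≤ 8 := by exact_mod_cast hm8
      _ = 8 * 1 := by ring
      _ ≤ 8 / ε * (S / L) := by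
          apply mul_le_mul h2 h1 (by norm_num) (by positivity)
  · push_neg at hm8
    have hm9 : 9 ≤ m := hm8
    set j := m - 1 with hj
    have hj8 : 8 ≤ j := by omega
    have h2m : 2 * m ≤ n := by
      have h3 : m ≤ k := min_le_left _ _
      have h4 : m ≤ n - k := min_le_right _ _
      omega
    have h2j : 2 * j ≤ n := by omega
    -- key combinatorial bound : choose n j ≤ m * s
    have hkey : n.choose j ≤ m * s := by
      rcases le_total k (n - k) with hA | hB
      · -- m = k ≥ 9
        have hmk : m = k := min_eq_left hA
        obtain ⟨k', rfl⟩ : ∃ k', k = k' + 1 := ⟨k - 1, by omega⟩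
        have hjk : j = k' := by omega
        have h1 : n.choose k' * k'.factorial * (n - k').factorial = n.factorial :=
          Nat.choose_mul_factorial_mul_factorial (by omega)
        have h5 : n - k' = n - (k' + 1) + 1 := by omega
        rw [h5] at h1
        have hfk : (k' + 1).factorial = (k' + 1) * k'.factorial := Nat.factorial_succ k'
        have hC1 : n.choose k' * (k'.factorial * (n - (k'+1) + 1).factorial)
            ≤ (m * s) * (k'.factorial * (n - (k'+1) + 1).factorial) := by
          calc n.choose k' * (k'.factorial * (n - (k'+1) + 1).factorial)
              = n.choose k' * k'.factorial * (n - (k'+1) + 1).factorial := by ring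
            _ = n.factorial := h1
            _ ≤ s * ((n - (k'+1) + 1).factorial * (k'+1).factorial) := hcount
            _ = (m * s) * (k'.factorial * (n - (k'+1) + 1).factorial) := by
                rw [hfk, hmk]; ring
        rw [hjk]
        exact Nat.le_of_mul_le_mul_right hC1 (by positivity)
      · -- m = n - k ≥ 9
        have hmk : m = n - k := min_eq_right hB
        have hkm : n - k ≤ k := by omega
        have hjn : j ≤ n := by omega
        have h1 : n.choose j * j.factorial * (n - j).factorial = n.factorial :=
          Nat.choose_mul_factorial_mul_factorial hjn
        have h5 : n - j = k + 1 := by omega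
        rw [h5] at h1
        have h6 : n - k + 1 = m + 1 := by omega
        rw [h6] at hcount
        have hfk1 : (k + 1).factorial = (k + 1) * k.factorial := Nat.factorial_succ k
        have hfm : (m + 1).factorial = (m + 1) * (m * j.factorial) := by
          have e2 : m = j + 1 := by omega
          rw [e2, Nat.factorial_succ, Nat.factorial_succ]
        -- choose * (k+1) * (j! * k!) ≤ s * (m+1) * m * (j! * k!)
        have hC1 : (n.choose j * (k + 1)) * (j.factorial * k.factorial)
            ≤ (s * ((m+1) * m)) * (j.factorial * k.factorial) := by
          calc (n.choose j * (k + 1)) * (j.factorial * k.factorial)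
              = (n.choose j * j.factorial) * ((k+1) * k.factorial) := by ring
            _ = n.factorial := by rw [← hfk1, ← h1]
            _ ≤ s * ((m+1).factorial * k.factorial) := hcount
            _ = (s * ((m+1) * m)) * (j.factorial * k.factorial) := by rw [hfm]; ring
        have hC2 : n.choose j * (k + 1) ≤ s * ((m + 1) * m) :=
          Nat.le_of_mul_le_mul_right hC1 (by positivity)
        have hC3 : n.choose j * (m + 1) ≤ (m * s) * (m + 1) := by
          calc n.choose j * (m + 1) ≤ n.choose j * (k + 1) :=
                Nat.mul_le_mul_left _ (by omega)
            _ ≤ s * ((m + 1) * m) := hC2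
            _ = (m * s) * (m + 1) := by ring
        exact Nat.le_of_mul_le_mul_right hC3 (by positivity)
    -- real analysis
    have hjpos : (0:ℝ) < j := by exact_mod_cast (by omega : 0 < j)
    have hmpos : (0:ℝ) < m := by exact_mod_cast (by omega : 0 < m)
    have hmR9 : (9:ℝ) ≤ m := by exact_mod_cast hm9
    have hjm : (j:ℝ) = (m:ℝ) - 1 := by
      have : (j:ℕ) + 1 = m := by omega
      have := congrArg (Nat.cast (R := ℝ)) this
      push_cast at this; linarith
    have hchoose : ((n:ℝ)/j)^j ≤ (n.choose j : ℝ) := choose_lb n j h2j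
    have hkeyR : (n.choose j : ℝ) ≤ (m:ℝ) * s := by exact_mod_cast hkey
    have hms : ((n:ℝ)/j)^j ≤ (m:ℝ) * s := le_trans hchoose hkeyR
    -- step a : m ≤ 3 S and m ≤ 3 n^(1-ε)
    have hnj2 : (2:ℝ) ≤ (n:ℝ)/j := by
      rw [le_div_iff₀ hjpos]
      exact_mod_cast h2j
    have h2pj : (2:ℝ)^j ≤ ((n:ℝ)/j)^j := pow_le_pow_left₀ (by norm_num) hnj2 j
    have h2pms : (2:ℝ)^j ≤ (m:ℝ) * s := le_trans h2pj hms
    have hm2 : (m:ℝ) * m ≤ 2^j := by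
      have := sq_le_two_pow m hm9
      rw [← hj] at this
      exact_mod_cast this
    have hss : (2:ℝ)^j ≤ (s:ℝ) * s := by
      have hpos : (0:ℝ) < 2^j := by positivity
      have h7 : (2:ℝ)^j * 2^j ≤ 2^j * ((s:ℝ)*s) := by
        calc (2:ℝ)^j * 2^j ≤ ((m:ℝ)*s) * ((m:ℝ)*s) :=
              mul_le_mul h2pms h2pms (by positivity) (by positivity)
          _ = ((m:ℝ)*m) * ((s:ℝ)*s) := by ring
          _ ≤ 2^j * ((s:ℝ)*s) := by
              apply mul_le_mul_of_nonneg_right hm2 (by positivity)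
      exact le_of_mul_le_mul_left (by linarith [h7]) hpos
    have hj2S : (j:ℝ) ≤ 2 * S := by
      have h8 : Real.logb 2 ((2:ℝ)^j) ≤ Real.logb 2 ((s:ℝ)*s) :=
        Real.logb_le_logb_of_le (by norm_num) (by positivity) hss
      rw [Real.logb_pow, Real.logb_self_eq_one (by norm_num),
        Real.logb_mul (by positivity) (by positivity)] at h8
      rw [hSdef]
      simp only [mul_one] at h8
      linarith
    have hmS : (m:ℝ) ≤ 3 * S := by nlinarith
    have hSsub : S ≤ (n:ℝ)^(1-ε) := by
      calc S ≤ Real.logb 2 ((2:ℝ)^((n:ℝ)^(1-ε))) :=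
            Real.logb_le_logb_of_le (by norm_num) (by positivity) hsub
        _ = (n:ℝ)^(1-ε) := Real.logb_rpow (by norm_num) (by norm_num)
    have hm3 : (m:ℝ) ≤ 3 * (n:ℝ)^(1-ε) := by linarith
    -- step b : n/j ≥ n^ε / 3
    have hnpos : (0:ℝ) < n := by linarith
    have hsplit : (n:ℝ) = (n:ℝ)^ε * (n:ℝ)^(1-ε) := by
      rw [← Real.rpow_add hnpos]
      norm_num
    have hjmle : (j:ℝ) ≤ m := by linarith
    have hstep : (n:ℝ)^ε / 3 ≤ (n:ℝ)/j := by
      have h9 : (n:ℝ)/m ≤ (n:ℝ)/j := by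
        apply div_le_div_of_nonneg_left (by linarith) hjpos hjmle
      have h10 : (n:ℝ)^ε/3 ≤ (n:ℝ)/m := by
        rw [div_le_div_iff₀ (by norm_num) hmpos]
        calc (n:ℝ)^ε * m ≤ (n:ℝ)^ε * (3 * (n:ℝ)^(1-ε)) := by
              apply mul_le_mul_of_nonneg_left hm3 (by positivity)
          _ = 3 * ((n:ℝ)^ε * (n:ℝ)^(1-ε)) := by ring
          _ = (n:ℝ) * 3 := by rw [← hsplit]; ring
      linarith
    -- step c : take logs
    have hXpos : (0:ℝ) < (n:ℝ)/j := by positivity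
    have hlog1 : (j:ℝ) * Real.logb 2 ((n:ℝ)/j) ≤ Real.logb 2 ((m:ℝ)*s) := by
      have h11 := Real.logb_le_logb_of_le (b := 2) (by norm_num) (by positivity) hms
      rwa [Real.logb_pow] at h11
    have hlogms : Real.logb 2 ((m:ℝ)*s) = Real.logb 2 (m:ℝ) + S := by
      rw [Real.logb_mul (by positivity) (by positivity)]
    have hlogm : Real.logb 2 (m:ℝ) ≤ m := by
      have h12 : (m:ℝ) ≤ 2^m := by
        have := Nat.lt_two_pow_self (n := m)
        exact_mod_cast this.le
      calc Real.logb 2 (m:ℝ) ≤ Real.logb 2 ((2:ℝ)^m) :=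
            Real.logb_le_logb_of_le (by norm_num) (by positivity) h12
        _ = m := by rw [Real.logb_pow, Real.logb_self_eq_one (by norm_num)]; ring
    have hlognj : ε * L - 2 ≤ Real.logb 2 ((n:ℝ)/j) := by
      have h13 : Real.logb 2 ((n:ℝ)^ε/3) ≤ Real.logb 2 ((n:ℝ)/j) :=
        Real.logb_le_logb_of_le (by norm_num) (by positivity) hstep
      have h14 : Real.logb 2 ((n:ℝ)^ε/3) = ε * L - Real.logb 2 3 := by
        rw [Real.logb_div (by positivity) (by norm_num)]
        congr 1
        rw [hLdef, Real.logb, Real.logb, Real.log_rpow hnpos]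
        ring
      have h15 : Real.logb 2 (3:ℝ) ≤ 2 := by
        have h16 : (3:ℝ) ≤ 2^(2:ℕ) := by norm_num
        calc Real.logb 2 (3:ℝ) ≤ Real.logb 2 ((2:ℝ)^(2:ℕ)) :=
              Real.logb_le_logb_of_le (by norm_num) (by norm_num) h16
          _ = 2 := by rw [Real.logb_pow, Real.logb_self_eq_one (by norm_num)]; norm_num
      linarith
    -- final assembly
    have hX2 : ε * L / 2 ≤ Real.logb 2 ((n:ℝ)/j) := by linarith
    have hjX : (j:ℝ) * (ε*L/2) ≤ (j:ℝ) * Real.logb 2 ((n:ℝ)/j) :=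
      mul_le_mul_of_nonneg_left hX2 (by positivity)
    have hcore : ((m:ℝ) - 1) * (ε*L/2) ≤ (m:ℝ) + S := by
      rw [← hjm]
      calc (j:ℝ) * (ε*L/2) ≤ (j:ℝ) * Real.logb 2 ((n:ℝ)/j) := hjX
        _ ≤ Real.logb 2 ((m:ℝ)*s) := hlog1
        _ = Real.logb 2 (m:ℝ) + S := hlogms
        _ ≤ (m:ℝ) + S := by linarith
    have hεL0 : (0:ℝ) < ε * L := mul_pos hε hL0
    have h4m : (m:ℝ) * 4 ≤ (m:ℝ) * (ε*L) := mul_le_mul_of_nonneg_left hlog (by positivity)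
    have hP1 : (m:ℝ) ≤ (m:ℝ)*(ε*L)/4 := by linarith
    have h9m : 9*(ε*L) ≤ (m:ℝ)*(ε*L) := mul_le_mul_of_nonneg_right hmR9 (le_of_lt hεL0)
    have hP2 : ε*L ≤ (m:ℝ)*(ε*L)/9 := by linarith
    have hexp : ((m:ℝ) - 1) * (ε*L/2) = (m:ℝ)*(ε*L)/2 - (ε*L)/2 := by ring
    have hfin : (m:ℝ)*(ε*L) ≤ 8 * S := by linarith
    have hgoal : (m:ℝ) ≤ 8 * S / (ε * L) := by
      rw [le_div_iff₀ (by positivity)]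
      linarith
    calc (m:ℝ) ≤ 8 * S / (ε*L) := hgoal
      _ = 8 / ε * (S / L) := by field_simp
end

section
/- Let a group G act on a set X, let H be a finite subset of X, and let S be a finite set of pairs (h,σ) with h ∈ H and σ ∈ G that is useful and independent. Then the orbit of H under the induced action of G on subsets of X has at least 2^|S| elements: |{σ·H : σ ∈ G}| ≥ 2^|S|. -/
open Pointwise

/-- Claim 10: if a group `G` acts on `X`, `H ⊆ X` is finite, and `S` is a
finite set of pairs `(h, σ) ∈ H × G` that is useful (`σ • h ∉ H`) and
independent (for distinct pairs, `σ' • h = h` and `σ' • (σ • h) = σ • h`),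
then the orbit of `H` under the induced action of `G` on subsets of `X`
has at least `2^|S|` elements. -/
theorem stmt_7 {G : Type*} [Group G] {X : Type*} [MulAction G X]
    (H : Set X) (hH : H.Finite) (S : Finset (X × G))
    (hSH : ∀ p ∈ S, p.1 ∈ H)
    (huseful : ∀ p ∈ S, p.2 • p.1 ∉ H)
    (hindep : ∀ p ∈ S, ∀ q ∈ S, p ≠ q →
      q.2 • p.1 = p.1 ∧ q.2 • p.2 • p.1 = p.2 • p.1) :
    (2 : ℕ∞) ^ S.card ≤ (MulAction.orbit G H).encard := by
  classical
  -- key combinatorial lemma about products over duplicate-free lists of pairs from S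
  have key : ∀ L : List (X × G), L.Nodup → (∀ q ∈ L, q ∈ S) →
      (∀ p ∈ S, p ∉ L → (L.map Prod.snd).prod • p.1 = p.1 ∧
          (L.map Prod.snd).prod • (p.2 • p.1) = p.2 • p.1) ∧
      (∀ p ∈ L, (L.map Prod.snd).prod • p.1 = p.2 • p.1) := by
    intro L
    induction L with
    | nil => simp
    | cons q L ih =>
      intro hnd hmem
      have hqS : q ∈ S := hmem q ((List.mem_cons_self : q ∈ q :: L))
      have hndL : L.Nodup := (List.nodup_cons.mp hnd).2
      have hqL : q ∉ L := (List.nodup_cons.mp hnd).1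
      have hmemL : ∀ r ∈ L, r ∈ S := fun r hr => hmem r (List.mem_cons_of_mem q hr)
      obtain ⟨ihA, ihB⟩ := ih hndL hmemL
      constructor
      · intro p hpS hpL
        have hpq : p ≠ q := fun h => hpL (h ▸ (List.mem_cons_self : q ∈ q :: L))
        have hpL' : p ∉ L := fun h => hpL (List.mem_cons_of_mem q h)
        obtain ⟨h1, h2⟩ := ihA p hpS hpL'
        obtain ⟨h3, h4⟩ := hindep p hpS q hqS hpq
        simp [List.map_cons, List.prod_cons, mul_smul, h1, h2, h3, h4]
      · intro p hp
        rcases List.mem_cons.mp hp with rfl | hpL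
        · have := (ihA p hqS hqL).1
          simp only [List.map_cons, List.prod_cons, mul_smul, this]
        · have hpS : p ∈ S := hmemL p hpL
          have hpq : p ≠ q := fun h => hqL (h ▸ hpL)
          have := ihB p hpL
          obtain ⟨_, h4⟩ := hindep p hpS q hqS hpq
          simp only [List.map_cons, List.prod_cons, mul_smul, this, h4]
  -- the map from subsets of S to translates of H
  set f : Finset (X × G) → Set X := fun T => (T.toList.map Prod.snd).prod • H with hf
  have hmemf : ∀ T ∈ S.powerset, ∀ p ∈ S, (p.2 • p.1 ∈ f T ↔ p ∈ T) := by
    intro T hT p hpS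
    have hTS : T ⊆ S := Finset.mem_powerset.mp hT
    obtain ⟨kA, kB⟩ := key T.toList T.nodup_toList
      (fun r hr => hTS (Finset.mem_toList.mp hr))
    constructor
    · intro hmem
      by_contra hpT
      have hpL : p ∉ T.toList := fun h => hpT (Finset.mem_toList.mp h)
      obtain ⟨_, h2⟩ := kA p hpS hpL
      rw [Set.mem_smul_set_iff_inv_smul_mem] at hmem
      rw [inv_smul_eq_iff.mpr h2.symm] at hmem
      exact huseful p hpS hmem
    · intro hpT
      have := kB p (Finset.mem_toList.mpr hpT)
      have h1 : p.1 ∈ H := hSH p hpS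
      rw [← this]
      exact Set.smul_mem_smul_set h1
  have hinj : Set.InjOn f ↑S.powerset := by
    intro T hT T' hT' heq
    by_contra hne
    obtain ⟨p, hp⟩ : ∃ p, (p ∈ T ∧ p ∉ T') ∨ (p ∈ T' ∧ p ∉ T) := by
      by_contra hc
      push_neg at hc
      apply hne
      ext a
      exact ⟨fun h => (hc a).1 h, fun h => (hc a).2 h⟩
    rcases hp with ⟨hpT, hpT'⟩ | ⟨hpT', hpT⟩
    · have hpS : p ∈ S := Finset.mem_powerset.mp hT hpT
      have h1 := (hmemf T hT p hpS).mpr hpT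
      rw [heq] at h1
      exact hpT' ((hmemf T' hT' p hpS).mp h1)
    · have hpS : p ∈ S := Finset.mem_powerset.mp hT' hpT'
      have h1 := (hmemf T' hT' p hpS).mpr hpT'
      rw [← heq] at h1
      exact hpT ((hmemf T hT p hpS).mp h1)
  have hsub : f '' ↑S.powerset ⊆ MulAction.orbit G H := by
    rintro _ ⟨T, _, rfl⟩
    exact ⟨(T.toList.map Prod.snd).prod, rfl⟩
  calc (2 : ℕ∞) ^ S.card = (↑(S.powerset) : Set (Finset (X × G))).encard := by
        rw [Set.encard_coe_eq_coe_finsetCard, Finset.card_powerset]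
        push_cast
        rfl
    _ = (f '' ↑S.powerset).encard := (hinj.encard_image).symm
    _ ≤ (MulAction.orbit G H).encard := Set.encard_mono hsub
end
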